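/- Let n ∈ ℕ, let M and P be n×n Hermitian complex matrices, and let z ∈ ℂ with Im z ≠ 0. Then M − zI and M + P − zI are invertible, and |(1/n)·Tr((M + P − zI)⁻¹) − (1/n)·Tr((M − zI)⁻¹)| ≤ rank(P)·‖P‖ / (n·(Im z)²), where ‖P‖ is the operator norm of P. In particular, if ‖M‖ and ‖P‖ are bounded and rank(P) is bounded as n → ∞, the normalized traces of the two resolvents differ by O(1/n). -/

import Mathlib

open Matrix
open scoped Matrix.Norms.L2Operator

noncomputable section

variable {m : ℕ}

lemma coord_le (x : EuclideanSpace ℂ (Fin m)) (i : Fin m) : ‖x i‖ ≤ ‖x‖ := by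
  have h := norm_inner_le_norm (𝕜 := ℂ) (EuclideanSpace.single i (1:ℂ)) x
  rw [EuclideanSpace.inner_single_left, EuclideanSpace.norm_single] at h
  simpa using h

lemma euclid_norm_le_of {c : ℝ} (hc : 0 ≤ c) (y x : EuclideanSpace ℂ (Fin m))
    (h : ∀ i, ‖y i‖ ≤ c * ‖x i‖) : ‖y‖ ≤ c * ‖x‖ := by
  rw [EuclideanSpace.norm_eq, EuclideanSpace.norm_eq]
  calc Real.sqrt (∑ i, ‖y i‖ ^ 2)
      ≤ Real.sqrt (∑ i, c ^ 2 * ‖x i‖ ^ 2) := by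
        apply Real.sqrt_le_sqrt
        apply Finset.sum_le_sum
        intro i _
        rw [← mul_pow]
        have := h i
        have : ‖y i‖ ≤ c * ‖x i‖ := h i
        nlinarith [norm_nonneg (y i), norm_nonneg (x i)]
    _ = c * Real.sqrt (∑ i, ‖x i‖ ^ 2) := by
        rw [← Finset.mul_sum, Real.sqrt_mul (by positivity), Real.sqrt_sq hc]

lemma diag_opNorm_le (d : Fin m → ℂ) {c : ℝ} (hc : 0 ≤ c) (h : ∀ i, ‖d i‖ ≤ c) :
    ‖Matrix.diagonal d‖ ≤ c := by
  rw [Matrix.l2_opNorm_def]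
  refine ContinuousLinearMap.opNorm_le_bound _ hc fun x => ?_
  apply euclid_norm_le_of hc
  intro i
  have h1 : ‖d i * x i‖ ≤ c * ‖x i‖ := by
    rw [norm_mul]; gcongr; exact h i
  refine le_trans (le_of_eq ?_) h1
  congr 1
  simp [Matrix.toEuclideanLin_apply, Matrix.mulVec_diagonal]

lemma entry_le_opNorm (A : Matrix (Fin m) (Fin m) ℂ) (i j : Fin m) : ‖A i j‖ ≤ ‖A‖ := by
  have h := Matrix.l2_opNorm_mulVec A (EuclideanSpace.single j (1:ℂ))
  rw [EuclideanSpace.norm_single, norm_one, mul_one] at h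
  have h2 : ‖((EuclideanSpace.equiv (Fin m) ℂ).symm (A *ᵥ (EuclideanSpace.single j (1:ℂ)))) i‖
      ≤ ‖(EuclideanSpace.equiv (Fin m) ℂ).symm (A *ᵥ (EuclideanSpace.single j (1:ℂ)))‖ :=
    coord_le _ i
  have h3 : ((EuclideanSpace.equiv (Fin m) ℂ).symm (A *ᵥ (EuclideanSpace.single j (1:ℂ)))) i = A i j := by
    simp [Matrix.mulVec, dotProduct, EuclideanSpace.single_apply]
  rw [h3] at h2
  exact h2.trans h

lemma unitary_norm_le (U : Matrix (Fin m) (Fin m) ℂ) (hU : U ∈ Matrix.unitaryGroup (Fin m) ℂ) :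
    ‖U‖ ≤ 1 := by
  have h1 : Uᴴ * U = 1 := by
    rw [← Matrix.star_eq_conjTranspose]
    exact Matrix.mem_unitaryGroup_iff'.mp hU
  have h2 := Matrix.l2_opNorm_conjTranspose_mul_self U
  rw [h1] at h2
  have hone : ‖(1 : Matrix (Fin m) (Fin m) ℂ)‖ ≤ 1 := by
    rw [Matrix.cstar_norm_def, _root_.map_one]
    exact ContinuousLinearMap.norm_id_le
  nlinarith [norm_nonneg U]

lemma eigenvalue_abs_le (A : Matrix (Fin m) (Fin m) ℂ) (hA : A.IsHermitian) (i : Fin m) :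
    |hA.eigenvalues i| ≤ ‖A‖ := by
  have hv := hA.mulVec_eigenvectorBasis i
  have h := Matrix.l2_opNorm_mulVec A (hA.eigenvectorBasis i)
  have hnorm : ‖hA.eigenvectorBasis i‖ = 1 := hA.eigenvectorBasis.orthonormal.1 i
  rw [hnorm, mul_one] at h
  have heq : (EuclideanSpace.equiv (Fin m) ℂ).symm (A *ᵥ hA.eigenvectorBasis i)
      = hA.eigenvalues i • hA.eigenvectorBasis i := by
    ext k
    show (A *ᵥ ⇑(hA.eigenvectorBasis i)) k = _
    rw [hv]
    simp
  rw [heq, norm_smul, hnorm, mul_one, Real.norm_eq_abs] at h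
  exact h

lemma resolvent_lemma (A : Matrix (Fin m) (Fin m) ℂ) (hA : A.IsHermitian)
    (z : ℂ) (hz : z.im ≠ 0) :
    IsUnit (A - z • (1 : Matrix (Fin m) (Fin m) ℂ)) ∧
      ‖(A - z • (1 : Matrix (Fin m) (Fin m) ℂ))⁻¹‖ ≤ 1 / |z.im| := by
  set U : Matrix (Fin m) (Fin m) ℂ := ↑(hA.eigenvectorUnitary) with hUdef
  have hU : U ∈ Matrix.unitaryGroup (Fin m) ℂ := hA.eigenvectorUnitary.2
  have hUU : U * star U = 1 := Matrix.mem_unitaryGroup_iff.mp hU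
  have hUU' : star U * U = 1 := Matrix.mem_unitaryGroup_iff'.mp hU
  set f : Fin m → ℂ := fun i => (hA.eigenvalues i : ℂ) - z with hfdef
  set g : Fin m → ℂ := fun i => ((hA.eigenvalues i : ℂ) - z)⁻¹ with hgdef
  have him : ∀ i, (f i).im = -z.im := by
    intro i
    simp [hfdef, Complex.sub_im]
  have hf : ∀ i, f i ≠ 0 := by
    intro i h0
    have := him i
    rw [h0] at this
    simp only [Complex.zero_im] at this
    exact hz (by linarith)
  have hfg : ∀ i, f i * g i = 1 := fun i => mul_inv_cancel₀ (hf i)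
  have hspec : A - z • (1 : Matrix (Fin m) (Fin m) ℂ) = U * Matrix.diagonal f * star U := by
    conv_lhs => rw [hA.spectral_theorem, Unitary.conjStarAlgAut_apply]
    have h1 : (z • (1 : Matrix (Fin m) (Fin m) ℂ)) = U * (z • (1 : Matrix (Fin m) (Fin m) ℂ)) * star U := by
      rw [Matrix.mul_smul, mul_one, Matrix.smul_mul, hUU]
    rw [h1, ← Matrix.sub_mul, ← Matrix.mul_sub]
    congr 2
    rw [Matrix.smul_one_eq_diagonal, Matrix.diagonal_sub]
    rfl
  have hright : (A - z • (1 : Matrix (Fin m) (Fin m) ℂ)) * (U * Matrix.diagonal g * star U) = 1 := by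
    rw [hspec]
    have e1 : (U * Matrix.diagonal f * star U) * (U * Matrix.diagonal g * star U)
        = U * ((Matrix.diagonal f * (star U * U) * Matrix.diagonal g) * star U) := by
      noncomm_ring
    rw [e1, hUU', mul_one, Matrix.diagonal_mul_diagonal]
    have : Matrix.diagonal (fun i => f i * g i) = 1 := by
      rw [show (fun i => f i * g i) = fun _ => (1:ℂ) from funext hfg]
      exact Matrix.diagonal_one
    rw [this, one_mul, hUU]
  have hunit : IsUnit (A - z • (1 : Matrix (Fin m) (Fin m) ℂ)) :=
    Matrix.isUnit_iff_isUnit_det _ |>.mpr (Matrix.isUnit_det_of_right_inverse hright)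
  refine ⟨hunit, ?_⟩
  rw [Matrix.inv_eq_right_inv hright]
  have hizm : (0:ℝ) < |z.im| := abs_pos.mpr hz
  have hg : ∀ i, ‖g i‖ ≤ 1 / |z.im| := by
    intro i
    have h1 : |z.im| ≤ ‖f i‖ := by
      have := Complex.abs_im_le_norm (f i)
      rw [him i] at this
      simpa using this
    rw [hgdef]
    simp only
    rw [show ((hA.eigenvalues i : ℂ) - z)⁻¹ = (f i)⁻¹ from rfl, norm_inv, one_div]
    exact inv_anti₀ hizm h1
  have hDg : ‖Matrix.diagonal g‖ ≤ 1 / |z.im| := diag_opNorm_le g (by positivity) hg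
  have hsU : ‖star U‖ ≤ 1 := by
    rw [Matrix.star_eq_conjTranspose, Matrix.l2_opNorm_conjTranspose]
    exact unitary_norm_le U hU
  have hUn : ‖U‖ ≤ 1 := unitary_norm_le U hU
  calc ‖U * Matrix.diagonal g * star U‖
      ≤ ‖U * Matrix.diagonal g‖ * ‖star U‖ := Matrix.l2_opNorm_mul _ _
    _ ≤ (‖U‖ * ‖Matrix.diagonal g‖) * ‖star U‖ := by
        gcongr; exact Matrix.l2_opNorm_mul _ _
    _ ≤ (1 * (1 / |z.im|)) * 1 := by
        exact mul_le_mul (mul_le_mul hUn hDg (norm_nonneg _) zero_le_one) hsU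
          (norm_nonneg _) (by positivity)
    _ = 1 / |z.im| := by ring

lemma trace_mul_bound (P X : Matrix (Fin m) (Fin m) ℂ) (hP : P.IsHermitian) :
    ‖(P * X).trace‖ ≤ (P.rank : ℝ) * ‖P‖ * ‖X‖ := by
  set U : Matrix (Fin m) (Fin m) ℂ := ↑(hP.eigenvectorUnitary) with hUdef
  have hU : U ∈ Matrix.unitaryGroup (Fin m) ℂ := hP.eigenvectorUnitary.2
  set B : Matrix (Fin m) (Fin m) ℂ := star U * X * U with hBdef
  set d : Fin m → ℝ := hP.eigenvalues with hddef
  have htr : (P * X).trace = ∑ i, (d i : ℂ) * B i i := by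
    conv_lhs => rw [hP.spectral_theorem, Unitary.conjStarAlgAut_apply]
    have e : (U * Matrix.diagonal (RCLike.ofReal ∘ d) * star U) * X
        = U * (Matrix.diagonal (RCLike.ofReal ∘ d) * (star U * X)) := by noncomm_ring
    rw [e, Matrix.trace_mul_comm]
    have e2 : (Matrix.diagonal (RCLike.ofReal ∘ d) * (star U * X)) * U
        = Matrix.diagonal (RCLike.ofReal ∘ d) * B := by rw [hBdef]; noncomm_ring
    rw [e2, Matrix.trace]
    congr 1
    ext i
    simp [Matrix.diag, Matrix.diagonal_mul]
  have hBn : ∀ i, ‖B i i‖ ≤ ‖X‖ := by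
    intro i
    have h1 : ‖B i i‖ ≤ ‖B‖ := entry_le_opNorm B i i
    have hsU : ‖star U‖ ≤ 1 := by
      rw [Matrix.star_eq_conjTranspose, Matrix.l2_opNorm_conjTranspose]
      exact unitary_norm_le U hU
    have hUn : ‖U‖ ≤ 1 := unitary_norm_le U hU
    have h2 : ‖B‖ ≤ ‖X‖ := by
      calc ‖star U * X * U‖ ≤ ‖star U * X‖ * ‖U‖ := Matrix.l2_opNorm_mul _ _
        _ ≤ (‖star U‖ * ‖X‖) * ‖U‖ := by
            have := Matrix.l2_opNorm_mul (star U) X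
            exact mul_le_mul_of_nonneg_right this (norm_nonneg _)
        _ ≤ (1 * ‖X‖) * 1 :=
            mul_le_mul (mul_le_mul_of_nonneg_right hsU (norm_nonneg _)) hUn
              (norm_nonneg _) (by positivity)
        _ = ‖X‖ := by ring
    exact h1.trans h2
  have hd : ∀ i, |d i| ≤ ‖P‖ := fun i => eigenvalue_abs_le P hP i
  rw [htr]
  set s : Finset (Fin m) := Finset.univ.filter (fun i => d i ≠ 0) with hsdef
  have hcard : (s.card : ℝ) = (P.rank : ℝ) := by
    rw [hP.rank_eq_card_non_zero_eigs]
    norm_cast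
    rw [Fintype.card_subtype]
  calc ‖∑ i, (d i : ℂ) * B i i‖
      ≤ ∑ i, ‖(d i : ℂ) * B i i‖ := norm_sum_le _ _
    _ = ∑ i ∈ s, ‖(d i : ℂ) * B i i‖ := by
        rw [Finset.sum_filter_of_ne]
        intro i _ hne
        intro h0
        apply hne
        simp [h0]
    _ ≤ ∑ i ∈ s, ‖P‖ * ‖X‖ := by
        apply Finset.sum_le_sum
        intro i _
        have h2 : ‖(d i : ℂ) * B i i‖ = |d i| * ‖B i i‖ := by
          rw [norm_mul, Complex.norm_real, Real.norm_eq_abs]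
        rw [h2]
        have h3 := hBn i
        exact mul_le_mul (hd i) h3 (norm_nonneg _) (norm_nonneg _)
    _ = (s.card : ℝ) * (‖P‖ * ‖X‖) := by rw [Finset.sum_const, nsmul_eq_mul]
    _ = (P.rank : ℝ) * ‖P‖ * ‖X‖ := by rw [hcard]; ring


/-- **Quantitative perturbation lemma for resolvent traces.** For Hermitian `n×n` matrices
`M, P` and nonreal `z`, both resolvents exist and the normalized traces of the resolvents of
`M + P` and `M` differ by at most `rank(P) ‖P‖ / (n (Im z)²)`, where `‖·‖` is the operator
norm. -/
theorem resolvent_trace_perturbation {n : ℕ}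
    (M P : Matrix (Fin n) (Fin n) ℂ) (hM : M.IsHermitian) (hP : P.IsHermitian)
    (z : ℂ) (hz : z.im ≠ 0) :
    IsUnit (M - z • (1 : Matrix (Fin n) (Fin n) ℂ)) ∧
    IsUnit (M + P - z • (1 : Matrix (Fin n) (Fin n) ℂ)) ∧
    ‖(1 / (n : ℂ)) * ((M + P - z • (1 : Matrix (Fin n) (Fin n) ℂ))⁻¹).trace
        - (1 / (n : ℂ)) * ((M - z • (1 : Matrix (Fin n) (Fin n) ℂ))⁻¹).trace‖
      ≤ (P.rank : ℝ) * ‖P‖ / ((n : ℝ) * z.im ^ 2) := by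
  obtain ⟨h1u, h1n⟩ := resolvent_lemma M hM z hz
  obtain ⟨h2u, h2n⟩ := resolvent_lemma (M + P) (hM.add hP) z hz
  refine ⟨h1u, h2u, ?_⟩
  set A1 : Matrix (Fin n) (Fin n) ℂ := M - z • 1 with hA1
  set A2 : Matrix (Fin n) (Fin n) ℂ := M + P - z • 1 with hA2
  set R1 : Matrix (Fin n) (Fin n) ℂ := A1⁻¹ with hR1
  set R2 : Matrix (Fin n) (Fin n) ℂ := A2⁻¹ with hR2
  have hd1 : IsUnit A1.det := (Matrix.isUnit_iff_isUnit_det _).mp h1u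
  have hd2 : IsUnit A2.det := (Matrix.isUnit_iff_isUnit_det _).mp h2u
  have hA1R1 : A1 * R1 = 1 := Matrix.mul_nonsing_inv _ hd1
  have hR2A2 : R2 * A2 = 1 := Matrix.nonsing_inv_mul _ hd2
  have hsub : A2 - A1 = P := by rw [hA1, hA2]; abel
  have key : R2 - R1 = -(R2 * P * R1) := by
    have e1 : R2 * A2 * R1 = R1 := by rw [hR2A2, one_mul]
    have e2 : R2 * A1 * R1 = R2 := by rw [mul_assoc, hA1R1, mul_one]
    have e3 : R2 * A2 * R1 - R2 * A1 * R1 = R2 * (A2 - A1) * R1 := by noncomm_ring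
    rw [e1, e2, hsub] at e3
    rw [← e3]
    abel
  have htrace : R2.trace - R1.trace = -((P * (R1 * R2)).trace) := by
    have h := congrArg Matrix.trace key
    rw [Matrix.trace_sub, Matrix.trace_neg] at h
    rw [h]
    congr 1
    rw [Matrix.trace_mul_cycle R2 P R1]
    rw [show R1 * R2 * P = (R1 * R2) * P from rfl, Matrix.trace_mul_comm]
  have hX : ‖R1 * R2‖ ≤ 1 / z.im ^ 2 := by
    calc ‖R1 * R2‖ ≤ ‖R1‖ * ‖R2‖ := Matrix.l2_opNorm_mul _ _
      _ ≤ (1 / |z.im|) * (1 / |z.im|) :=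
          mul_le_mul h1n h2n (norm_nonneg _) (by positivity)
      _ = 1 / z.im ^ 2 := by
          rw [div_mul_div_comm, one_mul, abs_mul_abs_self, ← sq]
  have htb : ‖(P * (R1 * R2)).trace‖ ≤ (P.rank : ℝ) * ‖P‖ * (1 / z.im ^ 2) := by
    refine le_trans (trace_mul_bound P (R1 * R2) hP) ?_
    exact mul_le_mul_of_nonneg_left hX (by positivity)
  have habs1 : ‖1 / (n : ℂ)‖ = ((n : ℝ))⁻¹ := by
    rw [norm_div, Complex.norm_natCast, norm_one, one_div]
  calc ‖(1 / (n : ℂ)) * R2.trace - (1 / (n : ℂ)) * R1.trace‖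
      = ‖(1 / (n : ℂ)) * (R2.trace - R1.trace)‖ := by rw [mul_sub]
    _ = ((n : ℝ))⁻¹ * ‖(P * (R1 * R2)).trace‖ := by
        rw [norm_mul, habs1, htrace, norm_neg]
    _ ≤ ((n : ℝ))⁻¹ * ((P.rank : ℝ) * ‖P‖ * (1 / z.im ^ 2)) :=
        mul_le_mul_of_nonneg_left htb (by positivity)
    _ = (P.rank : ℝ) * ‖P‖ / ((n : ℝ) * z.im ^ 2) := by
        rw [div_eq_mul_inv ((P.rank : ℝ) * ‖P‖), mul_inv]
        ring

end
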